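/- Let G be an abelian topological group and U a quasi-convex neighbourhood of 0. Then U_∞ := ⋂_{n≥1} (1/n)U equals ⋂_{χ ∈ U^▷} ker χ, and in particular U_∞ is a subgroup of G. -/

import Mathlib

/-- `T₊ = [-1/4, 1/4] + ℤ` inside the circle `𝕋 = ℝ/ℤ`. -/
def Tpos : Set (AddCircle (1 : ℝ)) :=
  {x | ∃ r : ℝ, |r| ≤ 1 / 4 ∧ (r : AddCircle (1 : ℝ)) = x}

/-- Quasi-convexity of a subset of an abelian topological group. -/
def QuasiConvex {G : Type*} [AddCommGroup G] [TopologicalSpace G] (A : Set G) : Prop :=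
  ∀ x ∉ A, ∃ χ : ContinuousAddMonoidHom G (AddCircle (1 : ℝ)),
    (∀ a ∈ A, χ a ∈ Tpos) ∧ χ x ∉ Tpos

/-- `(1/n)U = {x : kx ∈ U for 1 ≤ k ≤ n}`. -/
def oneOver {G : Type*} [AddCommGroup G] (n : ℕ) (U : Set G) : Set G :=
  {x : G | ∀ k : ℕ, 1 ≤ k → k ≤ n → k • x ∈ U}

/-- If two reals have equal classes in `ℝ/ℤ`, they differ by an integer. -/
lemma coe_eq_coe' {r s : ℝ} (h : (r : AddCircle (1:ℝ)) = s) : ∃ z : ℤ, r - s = z := by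
  have : ((r - s : ℝ) : AddCircle (1:ℝ)) = 0 := by
    rw [AddCircle.coe_sub, h, sub_self]
  obtain ⟨z, hz⟩ := (AddCircle.coe_eq_zero_iff (1:ℝ)).mp this
  exact ⟨z, by simpa using hz.symm⟩

/-- If every positive multiple of `y ∈ 𝕋` lies in `T₊`, then `y = 0`. -/
lemma tpos_nsmul {y : AddCircle (1:ℝ)} (h : ∀ n : ℕ, 1 ≤ n → n • y ∈ Tpos) : y = 0 := by
  obtain ⟨r, hr, hry⟩ := h 1 le_rfl
  rw [one_smul] at hry
  rcases eq_or_ne r 0 with h0 | h0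
  · rw [← hry, h0]; norm_cast
  have hrpos : 0 < |r| := abs_pos.mpr h0
  have hr4 : ∃ n : ℕ, ¬ (n : ℝ) * |r| ≤ 1/4 := by
    obtain ⟨n, hn⟩ := exists_nat_gt ((1/4) / |r|)
    exact ⟨n, by push_neg; calc (1:ℝ)/4 = (1/4)/|r| * |r| := by field_simp
      _ < n * |r| := by nlinarith⟩
  classical
  obtain ⟨n, hn, hmin⟩ : ∃ n : ℕ, 1/4 < (n:ℝ) * |r| ∧ ∀ m < n, (m:ℝ) * |r| ≤ 1/4 := by
    refine ⟨Nat.find hr4, ?_, fun m hm => ?_⟩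
    · exact not_le.mp (Nat.find_spec hr4)
    · exact not_not.mp fun hc => Nat.find_min hr4 hm hc
  have hn1 : 1 ≤ n := by
    rcases Nat.eq_zero_or_pos n with h | h
    · exfalso; rw [h] at hn; norm_num at hn
    · exact h
  have hprev : ((n - 1 : ℕ) : ℝ) * |r| ≤ 1/4 := hmin _ (Nat.sub_lt hn1 one_pos)
  have hcast : ((n - 1 : ℕ) : ℝ) = (n : ℝ) - 1 := by
    rw [Nat.cast_sub hn1]; norm_num
  have hhalf : (n:ℝ) * |r| ≤ 1/2 := by rw [hcast] at hprev; nlinarith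
  obtain ⟨s, hs, hsy⟩ := h n hn1
  rw [← hry, ← AddCircle.coe_nsmul, nsmul_eq_mul] at hsy
  obtain ⟨z, hz⟩ := coe_eq_coe' hsy
  have habs : |(n:ℝ)*r| = (n:ℝ)*|r| := by rw [abs_mul, Nat.abs_cast]
  have hzb : |(z:ℝ)| < 1 := by
    rw [← hz]
    calc |s - n*r| ≤ |s| + |n*r| := abs_sub _ _
      _ ≤ 1/4 + 1/2 := by rw [habs]; linarith
      _ < 1 := by norm_num
  have hz0 : (z:ℝ) = 0 := by
    have h1 : -1 < (z:ℝ) ∧ (z:ℝ) < 1 := abs_lt.mp hzb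
    have h2 : -1 < z ∧ z < 1 := by exact_mod_cast h1
    have : z = 0 := by omega
    exact_mod_cast this
  rw [hz0, sub_eq_zero] at hz
  rw [hz, habs] at hs
  linarith

/-- `U_∞ = ⋂_{n ≥ 1} (1/n)U` equals the intersection of the kernels of the characters in the
polar `U^▷`; in particular it is a subgroup of `G`. -/
theorem uInfty_eq_iInter_ker {G : Type*} [AddCommGroup G] [TopologicalSpace G]
    [IsTopologicalAddGroup G] (U : Set G) (hU : QuasiConvex U) (hU0 : U ∈ nhds (0 : G)) :
    (⋂ n ∈ {n : ℕ | 1 ≤ n}, oneOver n U) =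
      {x : G | ∀ χ : ContinuousAddMonoidHom G (AddCircle (1 : ℝ)),
        (∀ a ∈ U, χ a ∈ Tpos) → χ x = 0} ∧
    ∃ H : AddSubgroup G, (H : Set G) = ⋂ n ∈ {n : ℕ | 1 ≤ n}, oneOver n U := by
  have key : (⋂ n ∈ {n : ℕ | 1 ≤ n}, oneOver n U) =
      {x : G | ∀ χ : ContinuousAddMonoidHom G (AddCircle (1 : ℝ)),
        (∀ a ∈ U, χ a ∈ Tpos) → χ x = 0} := by
    ext x
    simp only [Set.mem_iInter, Set.mem_setOf_eq, oneOver]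
    constructor
    · intro hx χ hχ
      apply tpos_nsmul
      intro n hn
      rw [← map_nsmul]
      exact hχ _ (hx n hn n hn le_rfl)
    · intro hx n hn k hk1 hkn
      by_contra hc
      obtain ⟨χ, hχU, hχx⟩ := hU _ hc
      apply hχx
      rw [map_nsmul, hx χ hχU, smul_zero]
      exact ⟨0, by norm_num, by norm_cast⟩
  refine ⟨key, ⟨{
    carrier := {x : G | ∀ χ : ContinuousAddMonoidHom G (AddCircle (1 : ℝ)),
        (∀ a ∈ U, χ a ∈ Tpos) → χ x = 0}
    zero_mem' := fun χ _ => map_zero χ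
    add_mem' := fun {a b} ha hb χ hχ => by rw [map_add, ha χ hχ, hb χ hχ, add_zero]
    neg_mem' := fun {a} ha χ hχ => by rw [map_neg, ha χ hχ, neg_zero] }, key.symm⟩⟩
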